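/- arXiv:1607.05471 — 2 statements merged into one kernel-verified Lean document; each statement's English description precedes it below -/
import Mathlib

section
/- The weights λ_m^j satisfy the convolution-type inequality Σ_{k∈V_m} λ_m^{j−k} ≤ ρ|V_m| λ_m^j for every j ∈ ℤ^d. -/
open MeasureTheory Real Filter

/-- The cube `V_m = {j ∈ ℤ^d : |j(l)| ≤ m for all l}`. -/
noncomputable def cube (d m : ℕ) : Finset (Fin d → ℤ) :=
  Finset.Icc (fun _ => -(m : ℤ)) (fun _ => (m : ℤ))

/-- `κ̃_m(θ) = Σ_{k ∈ V_m} exp(−i⟨θ,k⟩)`, which is real-valued: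
it equals `Σ_{k ∈ V_m} cos(⟨θ,k⟩)`. -/
noncomputable def ktilde (d m : ℕ) (θ : Fin d → ℝ) : ℝ :=
  ∑ k ∈ cube d m, Real.cos (∑ l, θ l * (k l : ℝ))

/-- The box `[−π,π]^d`. -/
def box (d : ℕ) : Set (Fin d → ℝ) :=
  Set.Icc (fun _ => -Real.pi) (fun _ => Real.pi)

/-- `λ̃_m(θ) = h (ρ|V_m| − κ̃_m(θ))⁻¹`. -/
noncomputable def lamTilde (d m : ℕ) (ρ h : ℝ) (θ : Fin d → ℝ) : ℝ :=
  h * (ρ * (2 * (m : ℝ) + 1) ^ d - ktilde d m θ)⁻¹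

/-- The Fourier coefficient `λ_m^j = (2π)^{-d} ∫_{[−π,π]^d} exp(i⟨θ,j⟩) λ̃_m(θ) dθ`
(real-valued, equal to the cosine integral). -/
noncomputable def lam (d m : ℕ) (ρ h : ℝ) (j : Fin d → ℤ) : ℝ :=
  ((2 * Real.pi) ^ d)⁻¹ *
    ∫ θ in box d, Real.cos (∑ l, θ l * (j l : ℝ)) * lamTilde d m ρ h θ

/-! ### Auxiliary lemmas -/

lemma card_cube (d m : ℕ) : ((cube d m).card : ℝ) = (2 * (m : ℝ) + 1) ^ d := by
  rw [cube, Pi.card_Icc]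
  have h : ((m : ℤ) + 1 - -(m : ℤ)).toNat = 2 * m + 1 := by omega
  simp only [Int.card_Icc, h, Finset.prod_const, Finset.card_univ, Fintype.card_fin]
  push_cast; ring

lemma ktilde_le (d m : ℕ) (θ : Fin d → ℝ) : ktilde d m θ ≤ (2 * (m : ℝ) + 1) ^ d := by
  calc ktilde d m θ ≤ ∑ k ∈ cube d m, 1 :=
        Finset.sum_le_sum fun k _ => Real.cos_le_one _
    _ = ((cube d m).card : ℝ) := by simp
    _ = _ := card_cube d m

lemma denom_pos (d m : ℕ) {ρ : ℝ} (hρ : 1 < ρ) (θ : Fin d → ℝ) :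
    0 < ρ * (2 * (m : ℝ) + 1) ^ d - ktilde d m θ := by
  have h1 : (0:ℝ) < (2 * (m : ℝ) + 1) ^ d := by positivity
  have := ktilde_le d m θ
  nlinarith

lemma inner_cont (d : ℕ) (j : Fin d → ℤ) :
    Continuous fun θ : Fin d → ℝ => ∑ l, θ l * (j l : ℝ) :=
  continuous_finset_sum _ fun l _ => (continuous_apply l).mul continuous_const

lemma ktilde_cont (d m : ℕ) : Continuous (ktilde d m) :=
  continuous_finset_sum _ fun k _ => Real.continuous_cos.comp (inner_cont d k)

lemma sum_sin_zero (d m : ℕ) (θ : Fin d → ℝ) :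
    ∑ k ∈ cube d m, Real.sin (∑ l, θ l * (k l : ℝ)) = 0 := by
  refine Finset.sum_involution (fun k _ => -k) ?_ ?_ (fun k hk => ?_) (fun k hk => by simp)
  · intro k _
    have h : ∑ l, θ l * ((-k) l : ℝ) = -∑ l, θ l * (k l : ℝ) := by
      rw [← Finset.sum_neg_distrib]
      exact Finset.sum_congr rfl fun l _ => by simp [mul_neg]
    rw [h, Real.sin_neg, add_neg_cancel]
  · intro k _ hf hk
    apply hf
    have hk0 : k = 0 := by
      funext l; have h0 := congrFun hk l
      simp only [Pi.neg_apply, Pi.zero_apply] at h0 ⊢; omega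
    simp [hk0]
  · simp only [cube, Finset.mem_Icc] at hk ⊢
    refine ⟨fun l => ?_, fun l => ?_⟩ <;> simp only [Pi.neg_apply]
    · have h2 : k l ≤ (m:ℤ) := hk.2 l; omega
    · have h2 : -(m:ℤ) ≤ k l := hk.1 l; omega

lemma sum_cos_eq (d m : ℕ) (j : Fin d → ℤ) (θ : Fin d → ℝ) :
    ∑ k ∈ cube d m, Real.cos (∑ l, θ l * ((j - k) l : ℝ)) =
      Real.cos (∑ l, θ l * (j l : ℝ)) * ktilde d m θ := by
  have h1 : ∀ k ∈ cube d m,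
      Real.cos (∑ l, θ l * ((j - k) l : ℝ)) =
        Real.cos (∑ l, θ l * (j l : ℝ)) * Real.cos (∑ l, θ l * (k l : ℝ)) +
        Real.sin (∑ l, θ l * (j l : ℝ)) * Real.sin (∑ l, θ l * (k l : ℝ)) := by
    intro k _
    have h2 : ∑ l, θ l * ((j - k) l : ℝ) =
        (∑ l, θ l * (j l : ℝ)) - ∑ l, θ l * (k l : ℝ) := by
      rw [← Finset.sum_sub_distrib]
      exact Finset.sum_congr rfl fun l _ => by
        simp [Pi.sub_apply, Int.cast_sub, mul_sub]
    rw [h2, Real.cos_sub]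
  rw [Finset.sum_congr rfl h1, Finset.sum_add_distrib, ← Finset.mul_sum, ← Finset.mul_sum,
    sum_sin_zero, mul_zero, add_zero, ktilde]

lemma mem_box_iff (d : ℕ) (θ : Fin d → ℝ) :
    θ ∈ box d ↔ ∀ l, θ l ∈ Set.Icc (-Real.pi) Real.pi := by
  simp only [box, Set.mem_Icc, Pi.le_def, forall_and]

lemma indicator_box_eq (d : ℕ) (j : Fin d → ℤ) (θ : Fin d → ℝ) :
    (box d).indicator
      (fun θ : Fin d → ℝ => Complex.exp (((∑ l, θ l * (j l : ℝ) : ℝ) : ℂ) * Complex.I)) θ =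
    ∏ l, (Set.Icc (-Real.pi) Real.pi).indicator
        (fun t => Complex.exp ((j l : ℂ) * t * Complex.I)) (θ l) := by
  by_cases hθ : θ ∈ box d
  · rw [Set.indicator_of_mem hθ]
    have hl : ∀ l, θ l ∈ Set.Icc (-Real.pi) Real.pi := (mem_box_iff d θ).1 hθ
    have h1 : ∀ l, (Set.Icc (-Real.pi) Real.pi).indicator
        (fun t => Complex.exp ((j l : ℂ) * t * Complex.I)) (θ l)
        = Complex.exp ((j l : ℂ) * (θ l : ℂ) * Complex.I) := fun l =>
      Set.indicator_of_mem (hl l) _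
    rw [Finset.prod_congr rfl fun l _ => h1 l, ← Complex.exp_sum]
    congr 1
    rw [← Finset.sum_mul]
    congr 1
    push_cast
    exact Finset.sum_congr rfl fun l _ => by ring
  · rw [Set.indicator_of_notMem hθ]
    obtain ⟨l, hl⟩ := not_forall.1 (fun hall => hθ ((mem_box_iff d θ).2 hall))
    exact (Finset.prod_eq_zero (Finset.mem_univ l) (Set.indicator_of_notMem hl _)).symm

lemma exp_int_Icc (n : ℤ) :
    ∫ t in Set.Icc (-Real.pi) Real.pi, Complex.exp ((n : ℂ) * t * Complex.I) =
      ((if n = 0 then 2 * Real.pi else 0 : ℝ) : ℂ) := by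
  by_cases hn : n = 0
  · simp only [hn, Int.cast_zero, zero_mul, Complex.exp_zero, if_pos]
    rw [setIntegral_const]
    simp [Real.volume_Icc, two_mul, ENNReal.toReal_ofReal (by positivity : (0:ℝ) ≤ π + π),
      max_eq_left (by positivity : (0:ℝ) ≤ π + π),
      Complex.real_smul]
  · rw [if_neg hn, integral_Icc_eq_integral_Ioc,
      ← intervalIntegral.integral_of_le (by linarith [Real.pi_pos] : -Real.pi ≤ Real.pi)]
    have hrw : ∀ t : ℝ, (n : ℂ) * t * Complex.I = ((n : ℂ) * Complex.I) * t := fun t => by ring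
    simp_rw [hrw]
    rw [integral_exp_mul_complex (by simp [hn, Complex.I_ne_zero] : (n:ℂ) * Complex.I ≠ 0)]
    have h1 : Complex.exp ((n : ℂ) * Complex.I * (Real.pi : ℂ)) = (-1 : ℂ) ^ n := by
      rw [show (n : ℂ) * Complex.I * (Real.pi : ℂ) = n * (Real.pi * Complex.I) by ring,
        Complex.exp_int_mul, Complex.exp_pi_mul_I]
    have h2 : Complex.exp ((n : ℂ) * Complex.I * ((-Real.pi : ℝ) : ℂ)) = (-1 : ℂ) ^ n := by
      rw [show (n : ℂ) * Complex.I * ((-Real.pi : ℝ) : ℂ) = n * (-(Real.pi * Complex.I)) by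
          push_cast; ring,
        Complex.exp_int_mul, Complex.exp_neg, Complex.exp_pi_mul_I]
      norm_num
    rw [h1, h2, sub_self, zero_div, Complex.ofReal_zero]

lemma integral_cos_box_nonneg (d : ℕ) (j : Fin d → ℤ) :
    0 ≤ ∫ θ in box d, Real.cos (∑ l, θ l * (j l : ℝ)) := by
  have hFcont : Continuous
      (fun θ : Fin d → ℝ => Complex.exp (((∑ l, θ l * (j l : ℝ) : ℝ) : ℂ) * Complex.I)) := by
    apply Complex.continuous_exp.comp
    exact (Complex.continuous_ofReal.comp (inner_cont d j)).mul continuous_const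
  have hbox_meas : MeasurableSet (box d) := measurableSet_Icc
  have hFint : IntegrableOn
      (fun θ : Fin d → ℝ => Complex.exp (((∑ l, θ l * (j l : ℝ) : ℝ) : ℂ) * Complex.I))
      (box d) := hFcont.continuousOn.integrableOn_compact isCompact_Icc
  have hsplit : (∫ θ in box d,
        Complex.exp (((∑ l, θ l * (j l : ℝ) : ℝ) : ℂ) * Complex.I)) =
      ∏ l, ∫ t in Set.Icc (-Real.pi) Real.pi, Complex.exp ((j l : ℂ) * t * Complex.I) := by
    rw [← integral_indicator hbox_meas]
    rw [show ((box d).indicator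
        (fun θ : Fin d → ℝ => Complex.exp (((∑ l, θ l * (j l : ℝ) : ℝ) : ℂ) * Complex.I)))
        = fun θ => ∏ l, (Set.Icc (-Real.pi) Real.pi).indicator
          (fun t => Complex.exp ((j l : ℂ) * t * Complex.I)) (θ l)
      from funext (indicator_box_eq d j)]
    exact (MeasureTheory.integral_fintype_prod_eq_prod (ι := Fin d) (μ := fun _ => volume)
      (fun l t => (Set.Icc (-Real.pi) Real.pi).indicator
        (fun t => Complex.exp ((j l : ℂ) * t * Complex.I)) t)).trans
      (Finset.prod_congr rfl fun l _ => integral_indicator measurableSet_Icc)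
  have hval : (∫ θ in box d,
        Complex.exp (((∑ l, θ l * (j l : ℝ) : ℝ) : ℂ) * Complex.I)) =
      ((∏ l, if j l = 0 then 2 * Real.pi else 0 : ℝ) : ℂ) := by
    rw [hsplit, Complex.ofReal_prod]
    exact Finset.prod_congr rfl fun l _ => exp_int_Icc (j l)
  have hre : ∫ θ in box d, Real.cos (∑ l, θ l * (j l : ℝ)) =
      RCLike.re (∫ θ in box d,
        Complex.exp (((∑ l, θ l * (j l : ℝ) : ℝ) : ℂ) * Complex.I)) := by
    rw [← _root_.integral_re hFint]
    refine setIntegral_congr_fun hbox_meas fun θ _ => ?_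
    rw [RCLike.re_to_complex, Complex.exp_ofReal_mul_I_re]
  rw [hre, hval, RCLike.re_to_complex, Complex.ofReal_re]
  exact Finset.prod_nonneg fun l _ => by positivity

/-- the weights satisfy the convolution-type inequality
`Σ_{k∈V_m} λ_m^{j−k} ≤ ρ|V_m| λ_m^j` for every `j ∈ ℤ^d`. -/
theorem weights_convolution_inequality
    (d m : ℕ) (hd : 1 ≤ d) (hm : 1 ≤ m) (ρ h : ℝ) (hρ : 1 < ρ) (hh : 0 < h)
    (hnorm : ((2 * Real.pi) ^ d)⁻¹ * ∫ θ in box d, lamTilde d m ρ h θ = 1)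
    (j : Fin d → ℤ) :
    ∑ k ∈ cube d m, lam d m ρ h (j - k) ≤ ρ * (2 * (m : ℝ) + 1) ^ d * lam d m ρ h j := by
  have hLc : Continuous (lamTilde d m ρ h) := by
    apply continuous_const.mul
    exact (continuous_const.sub (ktilde_cont d m)).inv₀ fun θ => (denom_pos d m hρ θ).ne'
  have hbox_meas : MeasurableSet (box d) := measurableSet_Icc
  have hint : ∀ i : Fin d → ℤ, IntegrableOn
      (fun θ => Real.cos (∑ l, θ l * (i l : ℝ)) * lamTilde d m ρ h θ) (box d) := fun i =>
    ((Real.continuous_cos.comp (inner_cont d i)).mul hLc).continuousOn.integrableOn_compact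
      isCompact_Icc
  have key : ∀ θ : Fin d → ℝ,
      ρ * (2 * (m : ℝ) + 1) ^ d * (Real.cos (∑ l, θ l * (j l : ℝ)) * lamTilde d m ρ h θ) -
        ∑ k ∈ cube d m, Real.cos (∑ l, θ l * ((j - k) l : ℝ)) * lamTilde d m ρ h θ =
      h * Real.cos (∑ l, θ l * (j l : ℝ)) := by
    intro θ
    rw [← Finset.sum_mul, sum_cos_eq]
    have hD := denom_pos d m hρ θ
    simp only [lamTilde]
    field_simp
  have h2 : ∑ k ∈ cube d m, lam d m ρ h (j - k) =
      ((2 * Real.pi) ^ d)⁻¹ * ∫ θ in box d,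
        ∑ k ∈ cube d m, Real.cos (∑ l, θ l * ((j - k) l : ℝ)) * lamTilde d m ρ h θ := by
    simp only [lam]
    rw [← Finset.mul_sum, integral_finset_sum (cube d m) (fun k _ => hint (j - k))]
  have h3 : ρ * (2 * (m : ℝ) + 1) ^ d * lam d m ρ h j =
      ((2 * Real.pi) ^ d)⁻¹ * ∫ θ in box d,
        ρ * (2 * (m : ℝ) + 1) ^ d *
          (Real.cos (∑ l, θ l * (j l : ℝ)) * lamTilde d m ρ h θ) := by
    rw [lam, integral_const_mul]; ring
  have h4 : ρ * (2 * (m : ℝ) + 1) ^ d * lam d m ρ h j -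
      ∑ k ∈ cube d m, lam d m ρ h (j - k) =
      ((2 * Real.pi) ^ d)⁻¹ * (h * ∫ θ in box d, Real.cos (∑ l, θ l * (j l : ℝ))) := by
    rw [h2, h3, ← mul_sub, ← integral_sub ((hint j).const_mul _)
      (integrable_finset_sum _ fun k _ => hint (j - k))]
    congr 1
    rw [← integral_const_mul]
    exact setIntegral_congr_fun hbox_meas fun θ _ => key θ
  have hC : (0:ℝ) ≤ ((2 * Real.pi) ^ d)⁻¹ := by positivity
  have := integral_cos_box_nonneg d j
  nlinarith [mul_nonneg hC (mul_nonneg hh.le this), h4]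
end

section
/- Suppose X: [0,T] → ℝ is continuous with X_0 = R_0 and satisfies X_t = ∫_0^t (b_s(X) + Λ_s(X)) ds + R_t, where for all t: b_t(X) ≤ C‖X‖_t whenever X_t ≥ 0, b_t(X) ≥ −C‖X‖_t whenever X_t ≤ 0, and |Λ_t(X)| ≤ K(1 + ‖X‖_t) with K = Σ_{k∈V_m} ‖ω^{0,k}‖. Then ‖X‖_T ≤ exp(T(C + K))(2‖R‖_T + TK), and hence ‖X‖_T ≤ exp(T(C+2K)) + 2 exp(T(C+K))‖R‖_T when K ≤ K (trivially). Here ‖X‖_t = sup_{s≤t}|X_s|. -/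
open MeasureTheory intervalIntegral

/-- The running sup norm `‖X‖_t = sup_{0 ≤ s ≤ t} |X_s|`. -/
noncomputable def supNorm (X : ℝ → ℝ) (t : ℝ) : ℝ :=
  ⨆ s : Set.Icc (0 : ℝ) t, |X s|

lemma supNorm_bdd (X : ℝ → ℝ) (hX : Continuous X) (t : ℝ) :
    BddAbove (Set.range fun s : Set.Icc (0:ℝ) t => |X s|) := by
  have h := (isCompact_Icc (a := (0:ℝ)) (b := t)).bddAbove_image
      ((continuous_abs.comp hX).continuousOn)
  rwa [Set.image_eq_range] at h

lemma abs_le_supNorm {X : ℝ → ℝ} (hX : Continuous X) {s t : ℝ}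
    (hs : s ∈ Set.Icc (0:ℝ) t) : |X s| ≤ supNorm X t :=
  le_ciSup (supNorm_bdd X hX t) ⟨s, hs⟩

lemma supNorm_nonneg {X : ℝ → ℝ} (hX : Continuous X) {t : ℝ} (ht : 0 ≤ t) :
    0 ≤ supNorm X t :=
  le_trans (abs_nonneg _) (abs_le_supNorm hX ⟨le_rfl, ht⟩)

lemma supNorm_le {X : ℝ → ℝ} {t M : ℝ} (ht : 0 ≤ t)
    (h : ∀ s ∈ Set.Icc (0:ℝ) t, |X s| ≤ M) : supNorm X t ≤ M := by
  haveI : Nonempty (Set.Icc (0:ℝ) t) := ⟨⟨0, le_rfl, ht⟩⟩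
  exact ciSup_le fun s => h s s.2

lemma supNorm_mono {X : ℝ → ℝ} (hX : Continuous X) {t₁ t₂ : ℝ}
    (h0 : 0 ≤ t₁) (h : t₁ ≤ t₂) : supNorm X t₁ ≤ supNorm X t₂ :=
  supNorm_le h0 fun s hs => abs_le_supNorm hX ⟨hs.1, hs.2.trans h⟩

lemma supNorm_exists {X : ℝ → ℝ} (hX : Continuous X) {t : ℝ} (ht : 0 ≤ t) :
    ∃ s ∈ Set.Icc (0:ℝ) t, supNorm X t = |X s| := by
  obtain ⟨s, hs, hmax⟩ := isCompact_Icc.exists_isMaxOn (Set.nonempty_Icc.2 ht)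
    ((continuous_abs.comp hX).continuousOn)
  exact ⟨s, hs, le_antisymm (supNorm_le ht fun u hu => hmax hu)
    (abs_le_supNorm hX hs)⟩

lemma supNorm_neg (X : ℝ → ℝ) (t : ℝ) : supNorm (fun s => -X s) t = supNorm X t := by
  unfold supNorm; simp only [abs_neg]

lemma supNorm_monotoneOn {X : ℝ → ℝ} (hX : Continuous X) (T : ℝ) :
    MonotoneOn (supNorm X) (Set.Icc (0:ℝ) T) := fun a ha b _ hab =>
  supNorm_mono hX ha.1 hab

lemma supNorm_integrableOn {X : ℝ → ℝ} (hX : Continuous X) (T : ℝ) :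
    IntegrableOn (supNorm X) (Set.Icc (0:ℝ) T) :=
  (supNorm_monotoneOn hX T).integrableOn_isCompact isCompact_Icc

lemma supNorm_right_cont {X : ℝ → ℝ} (hX : Continuous X) {t₀ : ℝ} (ht₀ : 0 ≤ t₀)
    {ε : ℝ} (hε : 0 < ε) :
    ∃ δ > 0, ∀ u, t₀ ≤ u → u ≤ t₀ + δ → supNorm X u ≤ supNorm X t₀ + ε := by
  obtain ⟨δ, hδ, hcont⟩ := Metric.continuousAt_iff.1 (hX.continuousAt (x := t₀)) ε hε
  refine ⟨δ/2, by positivity, fun u hu hu' => supNorm_le (ht₀.trans hu) fun s hs => ?_⟩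
  rcases le_or_gt s t₀ with h | h
  · exact (abs_le_supNorm hX ⟨hs.1, h⟩).trans (by linarith [supNorm_nonneg hX ht₀, hε.le])
  · have hd : dist s t₀ < δ := by
      rw [Real.dist_eq, abs_of_nonneg (by linarith)]; linarith [hs.2]
    have h2 : |X s - X t₀| < ε := by have := hcont hd; rwa [Real.dist_eq] at this
    have h3 : |X t₀| ≤ supNorm X t₀ := abs_le_supNorm hX ⟨ht₀, le_rfl⟩
    have h4 := abs_sub_abs_le_abs_sub (X s) (X t₀)
    linarith

lemma key_bound (T C K : ℝ) (hT : 0 ≤ T) (hC : 0 ≤ C) (hK : 0 ≤ K)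
    (b Λ : ℝ → (ℝ → ℝ) → ℝ) (X R : ℝ → ℝ)
    (hXc : Continuous X) (hRc : Continuous R)
    (hb_upper : ∀ t ∈ Set.Icc (0 : ℝ) T, 0 ≤ X t → b t X ≤ C * supNorm X t)
    (hΛ : ∀ t ∈ Set.Icc (0 : ℝ) T, |Λ t X| ≤ K * (1 + supNorm X t))
    (hsol : ∀ t ∈ Set.Icc (0 : ℝ) T,
      X t = (∫ s in (0 : ℝ)..t, (b s X + Λ s X)) + R t)
    (t : ℝ) (ht : t ∈ Set.Icc (0:ℝ) T) :
    X t ≤ 2 * supNorm R T + ∫ s in Set.Ioc (0:ℝ) t, ((C + K) * supNorm X s + K) := by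
  set f : ℝ → ℝ := fun s => b s X + Λ s X with hf
  set g : ℝ → ℝ := fun s => (C + K) * supNorm X s + K with hg
  have hg_int : IntegrableOn g (Set.Icc (0:ℝ) T) := by
    exact ((supNorm_integrableOn hXc T).const_mul (C+K)).add
      (integrableOn_const measure_Icc_lt_top.ne)
  have hsub : Set.Ioc (0:ℝ) t ⊆ Set.Icc (0:ℝ) T := fun s hs =>
    ⟨hs.1.le, hs.2.trans ht.2⟩
  have hg_int' : IntegrableOn g (Set.Ioc (0:ℝ) t) := hg_int.mono_set hsub
  have hg_nonneg : ∀ s ∈ Set.Ioc (0:ℝ) t, 0 ≤ g s := fun s hs => by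
    have := supNorm_nonneg hXc hs.1.le; positivity
  have hI_nonneg : 0 ≤ ∫ s in Set.Ioc (0:ℝ) t, g s :=
    setIntegral_nonneg measurableSet_Ioc hg_nonneg
  have hRle : ∀ u ∈ Set.Icc (0:ℝ) T, |R u| ≤ supNorm R T := fun u hu =>
    abs_le_supNorm hRc hu
  have hRT : 0 ≤ supNorm R T := supNorm_nonneg hRc hT
  have hfg : ∀ s ∈ Set.Icc (0:ℝ) T, 0 < X s → f s ≤ g s := by
    intro s hs hXs
    have h1 := hb_upper s hs hXs.le
    have h2 := (abs_le.1 (hΛ s hs)).2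
    simp only [hf, hg]; nlinarith
  rcases le_or_gt (X t) 0 with hXt | hXt
  · linarith
  by_cases hint : IntervalIntegrable f volume 0 t
  swap
  · have h0 : X t = R t := by
      have := hsol t ht
      rwa [intervalIntegral.integral_undef hint, zero_add] at this
    have := (abs_le.1 (hRle t ht)).2
    linarith
  have hfI : IntegrableOn f (Set.Ioc (0:ℝ) t) :=
    (intervalIntegrable_iff_integrableOn_Ioc_of_le ht.1).1 hint
  set S : Set ℝ := Set.Icc (0:ℝ) t ∩ X ⁻¹' Set.Iic 0 with hS
  have hScompact : IsCompact S :=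
    isCompact_Icc.inter_right (isClosed_Iic.preimage hXc)
  by_cases hSne : S.Nonempty
  · set σ := sSup S with hσ
    have hσS : σ ∈ S := hScompact.sSup_mem hSne
    have hσ0 : 0 ≤ σ := hσS.1.1
    have hσt : σ ≤ t := hσS.1.2
    have hXσ : X σ ≤ 0 := hσS.2
    have hσT : σ ∈ Set.Icc (0:ℝ) T := ⟨hσ0, hσt.trans ht.2⟩
    have hpos : ∀ s ∈ Set.Ioc σ t, 0 < X s := by
      intro s hs
      by_contra h
      push_neg at h
      have hmem : s ∈ S := ⟨⟨hσ0.trans hs.1.le, hs.2⟩, h⟩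
      exact absurd (le_csSup hScompact.bddAbove hmem) (not_le.2 hs.1)
    have hf1 : IntervalIntegrable f volume 0 σ :=
      (intervalIntegrable_iff_integrableOn_Ioc_of_le hσ0).2
        (hfI.mono_set (Set.Ioc_subset_Ioc_right hσt))
    have hf2 : IntervalIntegrable f volume σ t :=
      (intervalIntegrable_iff_integrableOn_Ioc_of_le hσt).2
        (hfI.mono_set (Set.Ioc_subset_Ioc_left hσ0))
    have hadd := intervalIntegral.integral_add_adjacent_intervals hf1 hf2
    have heq1 := hsol t ht
    have heq2 := hsol σ hσT
    have hioc : (∫ s in σ..t, f s) = ∫ s in Set.Ioc σ t, f s :=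
      intervalIntegral.integral_of_le hσt
    have hmono : (∫ s in Set.Ioc σ t, f s) ≤ ∫ s in Set.Ioc σ t, g s := by
      refine setIntegral_mono_on
        (hfI.mono_set (Set.Ioc_subset_Ioc_left hσ0))
        (hg_int'.mono_set (Set.Ioc_subset_Ioc_left hσ0))
        measurableSet_Ioc (fun s hs => ?_)
      exact hfg s ⟨hσ0.trans hs.1.le, hs.2.trans ht.2⟩ (hpos s hs)
    have hmono2 : (∫ s in Set.Ioc σ t, g s) ≤ ∫ s in Set.Ioc (0:ℝ) t, g s := by
      refine setIntegral_mono_set hg_int'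
        ((ae_restrict_iff' measurableSet_Ioc).2 (ae_of_all _ hg_nonneg))
        (HasSubset.Subset.eventuallyLE (Set.Ioc_subset_Ioc_left hσ0))
    have hR1 := (abs_le.1 (hRle t ht)).2
    have hR2 := (abs_le.1 (hRle σ hσT)).1
    have : X t = X σ + (∫ s in σ..t, f s) + (R t - R σ) := by
      rw [heq1, heq2]; linarith [hadd]
    rw [hioc] at this
    linarith
  · have hpos : ∀ s ∈ Set.Ioc (0:ℝ) t, 0 < X s := by
      intro s hs
      by_contra h
      push_neg at h
      exact hSne ⟨s, ⟨hs.1.le, hs.2⟩, h⟩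
    have heq1 := hsol t ht
    have hioc : (∫ s in (0:ℝ)..t, f s) = ∫ s in Set.Ioc (0:ℝ) t, f s :=
      intervalIntegral.integral_of_le ht.1
    have hmono : (∫ s in Set.Ioc (0:ℝ) t, f s) ≤ ∫ s in Set.Ioc (0:ℝ) t, g s := by
      refine setIntegral_mono_on hfI hg_int' measurableSet_Ioc (fun s hs => ?_)
      exact hfg s (hsub hs) (hpos s hs)
    have hR1 := (abs_le.1 (hRle t ht)).2
    rw [hioc] at heq1
    linarith

lemma abs_key_bound (T C K : ℝ) (hT : 0 ≤ T) (hC : 0 ≤ C) (hK : 0 ≤ K)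
    (b Λ : ℝ → (ℝ → ℝ) → ℝ) (X R : ℝ → ℝ)
    (hXc : Continuous X) (hRc : Continuous R)
    (hb_upper : ∀ t ∈ Set.Icc (0 : ℝ) T, 0 ≤ X t → b t X ≤ C * supNorm X t)
    (hb_lower : ∀ t ∈ Set.Icc (0 : ℝ) T, X t ≤ 0 → -(C * supNorm X t) ≤ b t X)
    (hΛ : ∀ t ∈ Set.Icc (0 : ℝ) T, |Λ t X| ≤ K * (1 + supNorm X t))
    (hsol : ∀ t ∈ Set.Icc (0 : ℝ) T,
      X t = (∫ s in (0 : ℝ)..t, (b s X + Λ s X)) + R t)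
    (t : ℝ) (ht : t ∈ Set.Icc (0:ℝ) T) :
    |X t| ≤ 2 * supNorm R T + ∫ s in Set.Ioc (0:ℝ) t, ((C + K) * supNorm X s + K) := by
  have h1 := key_bound T C K hT hC hK b Λ X R hXc hRc hb_upper hΛ hsol t ht
  set X' : ℝ → ℝ := fun s => -X s with hX'
  set R' : ℝ → ℝ := fun s => -R s with hR'
  set b' : ℝ → (ℝ → ℝ) → ℝ := fun s _ => -(b s X) with hb'
  set Λ' : ℝ → (ℝ → ℝ) → ℝ := fun s _ => -(Λ s X) with hΛ'
  have h2 := key_bound T C K hT hC hK b' Λ' X' R' hXc.neg hRc.neg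
    (fun u hu hXu => by
      simp only [hb', hX', supNorm_neg]
      have := hb_lower u hu (by simpa [hX'] using hXu)
      linarith)
    (fun u hu => by
      simp only [hΛ', hX', supNorm_neg, abs_neg]
      exact hΛ u hu)
    (fun u hu => by
      simp only [hX', hR', hb', hΛ']
      have := hsol u hu
      have hneg : (∫ s in (0:ℝ)..u, (-(b s X) + -(Λ s X)))
          = -∫ s in (0:ℝ)..u, (b s X + Λ s X) := by
        rw [← intervalIntegral.integral_neg]
        congr 1; ext s; ring
      rw [hneg]; linarith)
    t ht
  simp only [hX', hR', supNorm_neg] at h2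
  exact abs_le.2 ⟨by linarith, h1⟩

lemma sup_key_bound (T C K : ℝ) (hT : 0 ≤ T) (hC : 0 ≤ C) (hK : 0 ≤ K)
    (b Λ : ℝ → (ℝ → ℝ) → ℝ) (X R : ℝ → ℝ)
    (hXc : Continuous X) (hRc : Continuous R)
    (hb_upper : ∀ t ∈ Set.Icc (0 : ℝ) T, 0 ≤ X t → b t X ≤ C * supNorm X t)
    (hb_lower : ∀ t ∈ Set.Icc (0 : ℝ) T, X t ≤ 0 → -(C * supNorm X t) ≤ b t X)
    (hΛ : ∀ t ∈ Set.Icc (0 : ℝ) T, |Λ t X| ≤ K * (1 + supNorm X t))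
    (hsol : ∀ t ∈ Set.Icc (0 : ℝ) T,
      X t = (∫ s in (0 : ℝ)..t, (b s X + Λ s X)) + R t)
    (t : ℝ) (ht : t ∈ Set.Icc (0:ℝ) T) :
    supNorm X t ≤ 2 * supNorm R T + ∫ s in Set.Ioc (0:ℝ) t, ((C + K) * supNorm X s + K) := by
  obtain ⟨u, hu, hequ⟩ := supNorm_exists hXc ht.1
  have huT : u ∈ Set.Icc (0:ℝ) T := ⟨hu.1, hu.2.trans ht.2⟩
  have h1 := abs_key_bound T C K hT hC hK b Λ X R hXc hRc hb_upper hb_lower hΛ hsol u huT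
  have hg_int : IntegrableOn (fun s => (C + K) * supNorm X s + K) (Set.Icc (0:ℝ) T) :=
    ((supNorm_integrableOn hXc T).const_mul (C+K)).add
      (integrableOn_const measure_Icc_lt_top.ne)
  have hsub : Set.Ioc (0:ℝ) t ⊆ Set.Icc (0:ℝ) T := fun s hs => ⟨hs.1.le, hs.2.trans ht.2⟩
  have hmono : (∫ s in Set.Ioc (0:ℝ) u, ((C + K) * supNorm X s + K))
      ≤ ∫ s in Set.Ioc (0:ℝ) t, ((C + K) * supNorm X s + K) := by
    refine setIntegral_mono_set (hg_int.mono_set hsub)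
      ((ae_restrict_iff' measurableSet_Ioc).2 (ae_of_all _ (fun s hs => by
        have := supNorm_nonneg hXc hs.1.le; positivity)))
      (HasSubset.Subset.eventuallyLE (Set.Ioc_subset_Ioc_right hu.2))
  rw [hequ]
  linarith

/-- a priori bound on the solution of
`X_t = ∫_0^t (b_s(X) + Λ_s(X)) ds + R_t` under one-sided growth conditions on `b`
and the bound `|Λ_t(X)| ≤ K(1 + ‖X‖_t)`:
`‖X‖_T ≤ exp(T(C+K))(2‖R‖_T + TK)`, and hence
`‖X‖_T ≤ exp(T(C+2K)) + 2 exp(T(C+K))‖R‖_T`. -/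
theorem solution_a_priori_bound
    (T C K : ℝ) (hT : 0 < T) (hC : 0 < C) (hK : 0 ≤ K)
    (b Λ : ℝ → (ℝ → ℝ) → ℝ) (X R : ℝ → ℝ)
    (hXc : Continuous X) (hRc : Continuous R) (hX0 : X 0 = R 0)
    (hb_upper : ∀ t ∈ Set.Icc (0 : ℝ) T, 0 ≤ X t → b t X ≤ C * supNorm X t)
    (hb_lower : ∀ t ∈ Set.Icc (0 : ℝ) T, X t ≤ 0 → -(C * supNorm X t) ≤ b t X)
    (hΛ : ∀ t ∈ Set.Icc (0 : ℝ) T, |Λ t X| ≤ K * (1 + supNorm X t))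
    (hsol : ∀ t ∈ Set.Icc (0 : ℝ) T,
      X t = (∫ s in (0 : ℝ)..t, (b s X + Λ s X)) + R t) :
    supNorm X T ≤ Real.exp (T * (C + K)) * (2 * supNorm R T + T * K) ∧
    supNorm X T ≤ Real.exp (T * (C + 2 * K)) + 2 * Real.exp (T * (C + K)) * supNorm R T := by
  set c : ℝ := C + K with hc
  have hc0 : 0 ≤ c := by positivity
  set A : ℝ := 2 * supNorm R T with hA
  have hRT : 0 ≤ supNorm R T := supNorm_nonneg hRc hT.le
  have hA0 : 0 ≤ A := by positivity
  set φ : ℝ → ℝ := supNorm X with hφ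
  -- the key Gronwall claim
  have claim : ∀ ε > 0, ∀ t ∈ Set.Icc (0:ℝ) T, φ t < (A + ε + K*t) * Real.exp (c*t) := by
    intro ε hε
    set β : ℝ → ℝ := fun s => (A + ε + K*s) * Real.exp (c*s) with hβ
    have hβc : Continuous β := by fun_prop
    by_contra hcon
    push_neg at hcon
    obtain ⟨tw, htw, htw2⟩ := hcon
    set E : Set ℝ := {u ∈ Set.Icc (0:ℝ) T | β u ≤ φ u} with hE
    have hEne : E.Nonempty := ⟨tw, htw, htw2⟩
    have hEbdd : BddBelow E := ⟨0, fun x hx => hx.1.1⟩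
    set t₀ := sInf E with ht₀
    have ht₀0 : 0 ≤ t₀ := le_csInf hEne fun x hx => hx.1.1
    have ht₀T : t₀ ≤ T := le_trans (csInf_le hEbdd hEne.choose_spec) hEne.choose_spec.1.2
    have ht₀mem : t₀ ∈ Set.Icc (0:ℝ) T := ⟨ht₀0, ht₀T⟩
    -- t₀ realizes the failure: β t₀ ≤ φ t₀
    have hB : β t₀ ≤ φ t₀ := by
      by_contra hlt
      push_neg at hlt
      set d : ℝ := (β t₀ - φ t₀)/2 with hd
      have hd0 : 0 < d := by simp only [hd]; linarith
      obtain ⟨δ₁, hδ₁, hrc⟩ := supNorm_right_cont hXc ht₀0 hd0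
      obtain ⟨δ₂, hδ₂, hβcont⟩ := Metric.continuousAt_iff.1 (hβc.continuousAt (x := t₀)) d hd0
      set δ := min δ₁ (δ₂/2) with hδdef
      have hδ0 : 0 < δ := lt_min hδ₁ (by positivity)
      obtain ⟨e, heE, helt⟩ := (csInf_lt_iff hEbdd hEne).1 (by linarith : sInf E < t₀ + δ)
      have het₀ : t₀ ≤ e := csInf_le hEbdd heE
      have h1 : φ e ≤ φ t₀ + d := hrc e het₀ (by
        have : δ ≤ δ₁ := min_le_left _ _
        linarith)
      have h2 : |β e - β t₀| < d := by
        have : dist e t₀ < δ₂ := by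
          rw [Real.dist_eq, abs_of_nonneg (by linarith)]
          have : δ ≤ δ₂/2 := min_le_right _ _
          linarith
        have := hβcont this
        rwa [Real.dist_eq] at this
      have h3 := (abs_lt.1 h2).1
      have h4 := heE.2
      simp only [hd] at h1
      linarith
    -- for s < t₀, φ s < β s
    have hprev : ∀ s, 0 ≤ s → s < t₀ → φ s < β s := by
      intro s hs0 hst
      by_contra h
      push_neg at h
      have : s ∈ E := ⟨⟨hs0, hst.le.trans ht₀T⟩, h⟩
      exact absurd (csInf_le hEbdd this) (not_le.2 hst)
    -- integral inequality at t₀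
    have hkey := sup_key_bound T C K hT.le hC.le hK b Λ X R hXc hRc
      hb_upper hb_lower hΛ hsol t₀ ht₀mem
    have hg_int : IntegrableOn (fun s => c * φ s + K) (Set.Icc (0:ℝ) T) :=
      ((supNorm_integrableOn hXc T).const_mul c).add
        (integrableOn_const measure_Icc_lt_top.ne)
    have hsub : Set.Ioo (0:ℝ) t₀ ⊆ Set.Icc (0:ℝ) T := fun s hs =>
      ⟨hs.1.le, hs.2.le.trans ht₀T⟩
    have hβK_int : IntegrableOn (fun s => c * β s + K) (Set.Ioo (0:ℝ) t₀) :=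
      ((((continuous_const.mul hβc)).add continuous_const).continuousOn.integrableOn_compact
        isCompact_Icc).mono_set Set.Ioo_subset_Icc_self
    have hstep1 : (∫ s in Set.Ioc (0:ℝ) t₀, (c * φ s + K))
        ≤ ∫ s in Set.Ioc (0:ℝ) t₀, (c * β s + K) := by
      rw [integral_Ioc_eq_integral_Ioo, integral_Ioc_eq_integral_Ioo]
      refine setIntegral_mono_on
        (hg_int.mono_set (hsub)) hβK_int measurableSet_Ioo (fun s hs => ?_)
      have := hprev s hs.1.le hs.2
      nlinarith
    -- FTC bound
    have hD : ∀ s : ℝ, HasDerivAt β (K * Real.exp (c*s) + (A + ε + K*s) * (Real.exp (c*s) * c)) s := by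
      intro s
      have h1 : HasDerivAt (fun x : ℝ => A + ε + K*x) K s := by
        have := ((hasDerivAt_id s).const_mul K).const_add (A+ε); rw [mul_one] at this; exact this
      have h2 : HasDerivAt (fun x : ℝ => Real.exp (c*x)) (Real.exp (c*s) * c) s := by
        have h3 : HasDerivAt (fun x : ℝ => c * x) c s := by
          simpa using (hasDerivAt_id s).const_mul c
        exact (Real.hasDerivAt_exp (c*s)).comp s h3
      exact h1.mul h2
    have hDc : Continuous (fun s => K * Real.exp (c*s) + (A + ε + K*s) * (Real.exp (c*s) * c)) := by
      fun_prop
    have hFTC : (∫ s in (0:ℝ)..t₀, (K * Real.exp (c*s) + (A + ε + K*s) * (Real.exp (c*s) * c)))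
        = β t₀ - β 0 :=
      intervalIntegral.integral_eq_sub_of_hasDerivAt (fun s _ => hD s)
        (hDc.intervalIntegrable 0 t₀)
    have hstep2 : (∫ s in (0:ℝ)..t₀, (c * β s + K))
        ≤ ∫ s in (0:ℝ)..t₀, (K * Real.exp (c*s) + (A + ε + K*s) * (Real.exp (c*s) * c)) := by
      refine intervalIntegral.integral_mono_on ht₀0
        (((continuous_const.mul hβc).add continuous_const).intervalIntegrable 0 t₀)
        (hDc.intervalIntegrable 0 t₀) (fun s hs => ?_)
      have hexp1 : 1 ≤ Real.exp (c*s) := Real.one_le_exp (mul_nonneg hc0 hs.1)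
      simp only [hβ]
      nlinarith
    have hβ0 : β 0 = A + ε := by simp [hβ]
    have hioc : (∫ s in (0:ℝ)..t₀, (c * β s + K)) = ∫ s in Set.Ioc (0:ℝ) t₀, (c * β s + K) :=
      intervalIntegral.integral_of_le ht₀0
    -- combine
    have hcomb : φ t₀ ≤ A + (β t₀ - (A + ε)) := by
      calc φ t₀ ≤ A + ∫ s in Set.Ioc (0:ℝ) t₀, (c * φ s + K) := by
            simpa [hc, hA] using hkey
        _ ≤ A + ∫ s in Set.Ioc (0:ℝ) t₀, (c * β s + K) := by linarith
        _ = A + ∫ s in (0:ℝ)..t₀, (c * β s + K) := by rw [hioc]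
        _ ≤ A + (β t₀ - β 0) := by rw [← hFTC]; linarith
        _ = A + (β t₀ - (A + ε)) := by rw [hβ0]
    linarith
  have hcomm : Real.exp (T*(C+K)) = Real.exp (c*T) := by rw [mul_comm]
  have hfirst : φ T ≤ Real.exp (T*(C+K)) * (2 * supNorm R T + T*K) := by
    refine le_of_forall_pos_le_add (fun ε' hε' => ?_)
    set ε := ε' / Real.exp (c*T) with hεdef
    have hexp : (0:ℝ) < Real.exp (c*T) := Real.exp_pos _
    have hε : 0 < ε := by positivity
    have h := claim ε hε T ⟨hT.le, le_rfl⟩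
    have hprod : ε * Real.exp (c*T) = ε' := div_mul_cancel₀ _ (ne_of_gt hexp)
    have heq : (A + ε + K*T) * Real.exp (c*T)
        = Real.exp (T*(C+K)) * (2 * supNorm R T + T*K) + ε' := by
      rw [hcomm, hA]
      linear_combination hprod
    linarith [h]
  refine ⟨hfirst, ?_⟩
  have hTK : T * K ≤ Real.exp (T*K) := by
    have := Real.add_one_le_exp (T*K); linarith
  have hsplit : Real.exp (T*(C+2*K)) = Real.exp (T*(C+K)) * Real.exp (T*K) := by
    rw [← Real.exp_add]; ring_nf
  have hexp2 : 0 < Real.exp (T*(C+K)) := Real.exp_pos _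
  nlinarith [hfirst]
end
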